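/- Let H ∈ F₂^{m×n} be (δ,γ)-expanding, let x₀ ∈ F₂ⁿ with |Hx₀| = ε_x·n, and let ε satisfy ε_x < ε < γδ/2. Let Ω = {y ∈ F₂ⁿ : |y ⊕ x₀| ≤ (2ε/γ)·n} be the Hamming ball of radius 2nε/γ around x₀, and let 0 < η < δ − 2ε/γ. Then every u in the η-boundary ∂_η Ω has energy |Hu| ≥ 2εn − ε_x n, and consequently the free-energy bottleneck ratio satisfies (Σ_{u ∈ ∂_η Ω} e^{−β|Hu|}) / (Σ_{w ∈ Ω} e^{−β|Hw|}) ≤ 2ⁿ · exp(−βn(ε − ε_x)) for every β > 0. -/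

import Mathlib

/-- A binary matrix `H ∈ F₂^{m×n}` is `(δ,γ)`-expanding if every `x ∈ F₂ⁿ`
with Hamming weight `|x| ≤ δn` satisfies `|Hx| ≥ γ|x|`. -/
def IsExpanding {m n : ℕ} (H : Matrix (Fin m) (Fin n) (ZMod 2)) (δ γ : ℝ) : Prop :=
  ∀ x : Fin n → ZMod 2, (hammingNorm x : ℝ) ≤ δ * n →
    γ * (hammingNorm x : ℝ) ≤ (hammingNorm (H.mulVec x) : ℝ)

lemma hn_add_le {n : ℕ} (f g : Fin n → ZMod 2) :
    hammingNorm (f + g) ≤ hammingNorm f + hammingNorm g := by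
  have h : f + g = f - g := by
    funext i; show f i + g i = f i - g i
    rw [sub_eq_add_neg, CharTwo.neg_eq]
  rw [h, show f - g = -f + g by
    funext i; show f i - g i = -f i + g i
    rw [sub_eq_add_neg, CharTwo.neg_eq, CharTwo.neg_eq], ← hammingDist_eq_hammingNorm]
  calc hammingDist f g ≤ hammingDist f 0 + hammingDist 0 g := hammingDist_triangle _ _ _
    _ = hammingNorm f + hammingNorm g := by
        rw [hammingDist_zero_right, hammingDist_zero_left]

set_option maxHeartbeats 1000000 in
/-- for a `(δ,γ)`-expanding `H`, a state `x₀` with `|Hx₀| = ε_x n`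
and `ε_x < ε < γδ/2`, let `Ω` be the Hamming ball of radius `2nε/γ` around `x₀`
and let `0 < η < δ − 2ε/γ`. Then every `u` in the η-boundary `∂_η Ω` has energy
`|Hu| ≥ 2εn − ε_x n`, and the bottleneck ratio satisfies
`pG(∂_η Ω)/pG(Ω) ≤ 2ⁿ · exp(−βn(ε − ε_x))` for every `β > 0`. -/
theorem low_energy_bottleneck {m n : ℕ} (H : Matrix (Fin m) (Fin n) (ZMod 2))
    (δ γ εx ε η β : ℝ) (hδ : 0 < δ) (hγ : 0 < γ) (hexp : IsExpanding H δ γ)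
    (x₀ : Fin n → ZMod 2) (hx₀ : (hammingNorm (H.mulVec x₀) : ℝ) = εx * n)
    (hεx : εx < ε) (hε : ε < γ * δ / 2)
    (hη0 : 0 < η) (hη : η < δ - 2 * ε / γ) (hβ : 0 < β) :
    let Ω : Finset (Fin n → ZMod 2) := Finset.univ.filter
      (fun y : Fin n → ZMod 2 => (hammingNorm (y + x₀) : ℝ) ≤ 2 * ε / γ * n)
    let bd : Finset (Fin n → ZMod 2) := Finset.univ.filter
      (fun u : Fin n → ZMod 2 => u ∉ Ω ∧ ∃ y ∈ Ω, (hammingNorm (u + y) : ℝ) ≤ η * n)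
    (∀ u ∈ bd, 2 * ε * n - εx * n ≤ (hammingNorm (H.mulVec u) : ℝ)) ∧
    (∑ u ∈ bd, Real.exp (-β * (hammingNorm (H.mulVec u) : ℝ))) /
        (∑ w ∈ Ω, Real.exp (-β * (hammingNorm (H.mulVec w) : ℝ)))
      ≤ 2 ^ n * Real.exp (-β * n * (ε - εx)) := by
  intro Ω bd
  have hn0 : (0:ℝ) ≤ n := Nat.cast_nonneg n
  have hεxn : 0 ≤ εx * n := by rw [← hx₀]; positivity
  have h2 : ∀ a : ZMod 2, a + a = 0 := by decide
  have hεn : 0 ≤ ε * n := by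
    rcases eq_or_lt_of_le hn0 with h | h
    · nlinarith
    · nlinarith
  have hrad : 0 ≤ 2 * ε / γ * n := by
    have : 2 * ε / γ * n = (2 / γ) * (ε * n) := by ring
    rw [this]; positivity
  -- Part 1
  have key : ∀ u ∈ bd, 2 * ε * n - εx * n ≤ (hammingNorm (H.mulVec u) : ℝ) := by
    intro u hu
    simp only [bd, Finset.mem_filter, Finset.mem_univ, true_and] at hu
    obtain ⟨huΩ, y, hy, huy⟩ := hu
    simp only [Ω, Finset.mem_filter, Finset.mem_univ, true_and] at hy huΩ
    push_neg at huΩ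
    set z : Fin n → ZMod 2 := u + x₀ with hzdef
    have hzsplit : z = (u + y) + (y + x₀) := by
      funext i
      show u i + x₀ i = (u i + y i) + (y i + x₀ i)
      have : (u i + y i) + (y i + x₀ i) = u i + (y i + y i) + x₀ i := by ring
      rw [this, h2, add_zero]
    have hzle : (hammingNorm z : ℝ) ≤ η * n + 2 * ε / γ * n := by
      have := hn_add_le (u + y) (y + x₀)
      rw [← hzsplit] at this
      have := (Nat.cast_le (α := ℝ)).2 this
      push_cast at this
      linarith
    have hzδ : (hammingNorm z : ℝ) ≤ δ * n := by nlinarith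
    have hexpz := hexp z hzδ
    have hzgt : 2 * ε / γ * n < (hammingNorm z : ℝ) := huΩ
    have hγz : 2 * ε * n < γ * (hammingNorm z : ℝ) := by
      have := mul_lt_mul_of_pos_left hzgt hγ
      calc 2 * ε * n = γ * (2 * ε / γ * n) := by field_simp
        _ < γ * (hammingNorm z : ℝ) := this
    have hHz : H.mulVec z = H.mulVec u + H.mulVec x₀ := by
      rw [hzdef, Matrix.mulVec_add]
    have htri : (hammingNorm (H.mulVec z) : ℝ)
        ≤ (hammingNorm (H.mulVec u) : ℝ) + (hammingNorm (H.mulVec x₀) : ℝ) := by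
      rw [hHz]
      have := (Nat.cast_le (α := ℝ)).2 (hn_add_le (H.mulVec u) (H.mulVec x₀))
      push_cast at this; linarith
    rw [hx₀] at htri
    linarith
  refine ⟨key, ?_⟩
  -- Part 2
  have hx₀Ω : x₀ ∈ Ω := by
    simp only [Ω, Finset.mem_filter, Finset.mem_univ, true_and]
    have : x₀ + x₀ = 0 := by funext i; exact h2 (x₀ i)
    rw [this, hammingNorm_zero]
    simpa using hrad
  have hden : Real.exp (-β * (εx * n)) ≤
      ∑ w ∈ Ω, Real.exp (-β * (hammingNorm (H.mulVec w) : ℝ)) := by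
    rw [← hx₀]
    exact Finset.single_le_sum (f := fun w => Real.exp (-β * (hammingNorm (H.mulVec w) : ℝ)))
      (fun i _ => (Real.exp_pos _).le) hx₀Ω
  have hdpos : 0 < ∑ w ∈ Ω, Real.exp (-β * (hammingNorm (H.mulVec w) : ℝ)) :=
    lt_of_lt_of_le (Real.exp_pos _) hden
  have hnum : ∑ u ∈ bd, Real.exp (-β * (hammingNorm (H.mulVec u) : ℝ))
      ≤ (2 : ℝ) ^ n * Real.exp (-β * (2 * ε * n - εx * n)) := by
    calc ∑ u ∈ bd, Real.exp (-β * (hammingNorm (H.mulVec u) : ℝ))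
        ≤ ∑ _u ∈ bd, Real.exp (-β * (2 * ε * n - εx * n)) := by
          apply Finset.sum_le_sum
          intro u hu
          apply Real.exp_le_exp.2
          nlinarith [key u hu]
      _ = bd.card * Real.exp (-β * (2 * ε * n - εx * n)) := by
          rw [Finset.sum_const, nsmul_eq_mul]
      _ ≤ (2 : ℝ) ^ n * Real.exp (-β * (2 * ε * n - εx * n)) := by
          apply mul_le_mul_of_nonneg_right _ (Real.exp_pos _).le
          have hcard : bd.card ≤ 2 ^ n := by
            calc bd.card ≤ Fintype.card (Fin n → ZMod 2) := Finset.card_le_univ bd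
              _ = 2 ^ n := by simp [Fintype.card_fun]
          exact_mod_cast hcard
  rw [div_le_iff₀ hdpos]
  calc ∑ u ∈ bd, Real.exp (-β * (hammingNorm (H.mulVec u) : ℝ))
      ≤ (2 : ℝ) ^ n * Real.exp (-β * (2 * ε * n - εx * n)) := hnum
    _ ≤ (2 : ℝ) ^ n * (Real.exp (-β * n * (ε - εx)) * Real.exp (-β * (εx * n))) := by
        apply mul_le_mul_of_nonneg_left _ (by positivity)
        rw [← Real.exp_add]
        apply Real.exp_le_exp.2
        nlinarith [mul_nonneg hβ.le (mul_nonneg hn0 (sub_nonneg.2 hεx.le))]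
    _ ≤ 2 ^ n * Real.exp (-β * n * (ε - εx)) *
        ∑ w ∈ Ω, Real.exp (-β * (hammingNorm (H.mulVec w) : ℝ)) := by
        have h1 : (2:ℝ) ^ n * (Real.exp (-β * n * (ε - εx)) * Real.exp (-β * (εx * n)))
            = (2 ^ n * Real.exp (-β * n * (ε - εx))) * Real.exp (-β * (εx * n)) := by ring
        rw [h1]
        exact mul_le_mul_of_nonneg_left hden (by positivity)
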